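/- For every real M > 1, the squared two-step contraction factor of the deterministic silver stepsize schedule is strictly smaller than that of the constant stepsize 2/(M+1): ((√(2M² − 2M + 1) − M)/(2 − M + √(2M² − 2M + 1)))² < ((M−1)/(M+1))⁴. -/
import Mathlib


theorem stmt_18 (M : ℝ) (hM : 1 < M) :
    ((Real.sqrt (2 * M ^ 2 - 2 * M + 1) - M)
        / (2 - M + Real.sqrt (2 * M ^ 2 - 2 * M + 1))) ^ 2
      < ((M - 1) / (M + 1)) ^ 4 := by
  set s := Real.sqrt (2 * M ^ 2 - 2 * M + 1) with hs
  have harg : (0:ℝ) ≤ 2 * M ^ 2 - 2 * M + 1 := by nlinarith [sq_nonneg (M - 1), sq_nonneg M]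
  have hs2 : s ^ 2 = 2 * M ^ 2 - 2 * M + 1 := Real.sq_sqrt harg
  have hs0 : 0 ≤ s := Real.sqrt_nonneg _
  have hsM : M < s := by nlinarith [sq_nonneg (M - 1)]
  have hden : 0 < 2 - M + s := by linarith
  have hM1 : 0 < M + 1 := by linarith
  have key : (s - M) / (2 - M + s) < ((M - 1) / (M + 1)) ^ 2 := by
    rw [div_pow, div_lt_div_iff₀ hden (by positivity)]
    nlinarith [sq_nonneg (s - M), sq_nonneg (M - 1), mul_pos (sub_pos.mpr hsM) (show (0:ℝ) < (M-1)^2 by nlinarith)]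
  have hnn : 0 ≤ (s - M) / (2 - M + s) := div_nonneg (by linarith) (le_of_lt hden)
  have := pow_lt_pow_left₀ key hnn (n := 2) (by norm_num)
  calc ((s - M) / (2 - M + s)) ^ 2 < (((M - 1) / (M + 1)) ^ 2) ^ 2 := this
    _ = ((M - 1) / (M + 1)) ^ 4 := by ring
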